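/- Fix l, d, s ∈ ℕ with 0 ≤ d ≤ ⌊l/2⌋, and set P^l_{d,s} := {P ∈ ℂ[X₀,X₁]_l ∖ {0} : dim_ℂ C_P^d = s} and P^l_r := {P ∈ ℂ[X₀,X₁]_l ∖ {0} : d₁(P) = r}. Then: P^l_{d,s} = P^l_{l−d+1−s} if l − 2d < s ≤ l − d; P^l_{d,s} = ⋃_{d+1 ≤ r ≤ ⌊l/2⌋+1} P^l_r if s = l − 2d; and P^l_{d,s} = ∅ if s < l − 2d or s > l − d. -/

import Mathlib

/-!
Common definitions: the apolar action of `ℂ[X₀,X₁]` on itself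
(`Q • P := Q(∂/∂X₀, ∂/∂X₁)(P)`), the apolar ideal `Ann(P)` and its homogeneous
components, the cokernel `C_P^d` of `Q ↦ Q • P : ℂ[X₀,X₁]_d → ℂ[X₀,X₁]_{l-d}`,
the invariant `d₁(P)` and the Waring rank.
-/

open MvPolynomial

noncomputable section

/-- The partial derivative `∂/∂Xᵢ` as a `ℂ`-linear endomorphism of `ℂ[X₀,X₁]`. -/
def pd (i : Fin 2) : Module.End ℂ (MvPolynomial (Fin 2) ℂ) := (pderiv (R := ℂ) i).toLinearMap

lemma pd_comm : Commute (pd 0) (pd 1) := by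
  apply LinearMap.ext
  intro P
  induction P using MvPolynomial.induction_on' with
  | monomial s a =>
      simp [pd, Module.End.mul_apply, pderiv_monomial]
      rw [tsub_right_comm, mul_right_comm]
  | add p q hp hq => simp_all [Module.End.mul_apply, map_add]

/-- The endomorphism `∂₀^{m 0} ∘ ∂₁^{m 1}` of `ℂ[X₀,X₁]`, as a monoid homomorphism in the
exponent `m`. -/
def derivMonomialHom :
    Multiplicative (Fin 2 →₀ ℕ) →* Module.End ℂ (MvPolynomial (Fin 2) ℂ) where
  toFun m := pd 0 ^ (Multiplicative.toAdd m 0) * pd 1 ^ (Multiplicative.toAdd m 1)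
  map_one' := by simp
  map_mul' a b := by
    simp only [toAdd_mul, Finsupp.add_apply, pow_add]
    exact (Commute.pow_pow pd_comm _ _).mul_mul_mul_comm _ _

/-- The representation of `ℂ[X₀,X₁]` by constant-coefficient differential operators:
`diffOp Q = Q(∂/∂X₀, ∂/∂X₁)`.  It is the morphism of `ℂ`-algebras sending `X i` to
`∂/∂Xᵢ`. -/
def diffOp : MvPolynomial (Fin 2) ℂ →ₐ[ℂ] Module.End ℂ (MvPolynomial (Fin 2) ℂ) :=
  AddMonoidAlgebra.lift ℂ _ (Fin 2 →₀ ℕ) derivMonomialHom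

/-- The apolar action `Q • P := Q(∂/∂X₀, ∂/∂X₁)(P)`. -/
def apolar (Q P : MvPolynomial (Fin 2) ℂ) : MvPolynomial (Fin 2) ℂ := diffOp Q P

/-- For fixed `P`, the map `Q ↦ Q • P` is `ℂ`-linear in `Q`. -/
def apolarLM (P : MvPolynomial (Fin 2) ℂ) :
    MvPolynomial (Fin 2) ℂ →ₗ[ℂ] MvPolynomial (Fin 2) ℂ :=
  (LinearMap.applyₗ P).comp diffOp.toLinearMap

lemma apolarLM_apply (P Q : MvPolynomial (Fin 2) ℂ) : apolarLM P Q = apolar Q P := rfl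

/-- The apolar ideal `Ann(P) = {Q | Q • P = 0}`. -/
def annIdeal (P : MvPolynomial (Fin 2) ℂ) : Ideal (MvPolynomial (Fin 2) ℂ) where
  carrier := {Q | apolar Q P = 0}
  zero_mem' := by simp [apolar]
  add_mem' := by
    intro a b ha hb
    simp only [Set.mem_setOf_eq, apolar, map_add, LinearMap.add_apply] at *
    rw [ha, hb, add_zero]
  smul_mem' := by
    intro c Q hQ
    simp only [Set.mem_setOf_eq, smul_eq_mul, apolar, map_mul, Module.End.mul_apply] at *
    rw [hQ, map_zero]

/-- The degree-`d` homogeneous component `Ann(P)_d` of the apolar ideal of `P`. -/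
def annComp (P : MvPolynomial (Fin 2) ℂ) (d : ℕ) :
    Submodule ℂ (MvPolynomial (Fin 2) ℂ) :=
  homogeneousSubmodule (Fin 2) ℂ d ⊓ LinearMap.ker (apolarLM P)

/-- The image of `ℂ[X₀,X₁]_d` under `Q ↦ Q • P`, viewed as a subspace of `ℂ[X₀,X₁]_{l-d}`
(for `P` homogeneous of degree `l` and `d ≤ l` the image is indeed contained in
`ℂ[X₀,X₁]_{l-d}`). -/
def apolarImage (P : MvPolynomial (Fin 2) ℂ) (l d : ℕ) :
    Submodule ℂ (homogeneousSubmodule (Fin 2) ℂ (l - d)) :=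
  Submodule.comap (homogeneousSubmodule (Fin 2) ℂ (l - d)).subtype
    (Submodule.map (apolarLM P) (homogeneousSubmodule (Fin 2) ℂ d))

/-- `C_P^d`: the cokernel of the `ℂ`-linear map `ℂ[X₀,X₁]_d → ℂ[X₀,X₁]_{l-d}`, `Q ↦ Q • P`. -/
abbrev ApolarCoker (P : MvPolynomial (Fin 2) ℂ) (l d : ℕ) :=
  (homogeneousSubmodule (Fin 2) ℂ (l - d)) ⧸ apolarImage P l d

/-- `d₁(P)`: the minimal degree of a nonzero homogeneous polynomial in `Ann(P)`. -/
def d1 (P : MvPolynomial (Fin 2) ℂ) : ℕ :=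
  sInf {d | ∃ Q : MvPolynomial (Fin 2) ℂ, Q ≠ 0 ∧ Q.IsHomogeneous d ∧ apolar Q P = 0}

/-- The Waring rank of a binary form `P` of degree `l`: the least `r` such that `P` is a sum
of `r` `l`-th powers of linear forms. -/
def waringRank (l : ℕ) (P : MvPolynomial (Fin 2) ℂ) : ℕ :=
  sInf {r | ∃ lam : Fin r → MvPolynomial (Fin 2) ℂ,
    (∀ i, (lam i).IsHomogeneous 1) ∧ P = ∑ i, lam i ^ l}

end

noncomputable section
open Finsupp

lemma fin2_decomp (a : Fin 2 →₀ ℕ) : a = Finsupp.single 0 (a 0) + Finsupp.single 1 (a 1) := by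
  ext i; fin_cases i <;> simp [Finsupp.single_apply]

lemma nat_desc_succ (n k : ℕ) : n * Nat.descFactorial (n-1) k = Nat.descFactorial n (k+1) := by
  cases n with
  | zero => simp
  | succ m => exact (Nat.succ_descFactorial_succ m k).symm

lemma pd_pow_monomial (i : Fin 2) (k : ℕ) (b : Fin 2 →₀ ℕ) (c : ℂ) :
    (pd i ^ k) (monomial b c) =
      monomial (b - Finsupp.single i k) (c * ((b i).descFactorial k : ℂ)) := by
  induction k generalizing b c with
  | zero => simp
  | succ k ih =>
      rw [pow_succ, Module.End.mul_apply]
      have h1 : (pd i) (monomial b c) = monomial (b - Finsupp.single i 1) (c * (b i)) := by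
        simp [pd, pderiv_monomial]
      rw [h1, ih]
      congr 1
      · rw [tsub_tsub, ← Finsupp.single_add, Nat.add_comm]
      · have : ((b - Finsupp.single i 1 : Fin 2 →₀ ℕ)) i = b i - 1 := by
          simp [Finsupp.tsub_apply]
        rw [this, mul_assoc, ← Nat.cast_mul, nat_desc_succ]

lemma diffOp_monomial (m : Fin 2 →₀ ℕ) (c : ℂ) :
    diffOp (monomial m c) = c • (pd 0 ^ (m 0) * pd 1 ^ (m 1)) := by
  rw [← single_eq_monomial]
  exact AddMonoidAlgebra.lift_single _ _ _

lemma apolar_monomial (a b : Fin 2 →₀ ℕ) (c c' : ℂ) :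
    apolar (monomial a c) (monomial b c') =
      monomial (b - a) (c * (c' * (((b 1).descFactorial (a 1) : ℂ) *
        ((b 0).descFactorial (a 0) : ℂ)))) := by
  unfold apolar
  rw [diffOp_monomial, LinearMap.smul_apply, Module.End.mul_apply, pd_pow_monomial,
    pd_pow_monomial]
  have h0 : (b - Finsupp.single (1 : Fin 2) (a 1)) (0 : Fin 2) = b 0 := by
    rw [Finsupp.tsub_apply, Finsupp.single_apply]
    simp
  have he : b - Finsupp.single 1 (a 1) - Finsupp.single 0 (a 0) = b - a := by
    rw [tsub_tsub, add_comm, ← fin2_decomp]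
  rw [h0, he, smul_monomial, smul_eq_mul]
  ring_nf

end
noncomputable section
open Finsupp

abbrev R2 := MvPolynomial (Fin 2) ℂ

lemma deg2 (m : Fin 2 →₀ ℕ) : m.degree = m 0 + m 1 := by
  classical
  rw [Finsupp.degree, ← Fin.sum_univ_two m]
  exact Finset.sum_subset (Finset.subset_univ _)
    (fun x _ hx => Finsupp.notMem_support_iff.mp hx)

lemma homog_coeff_deg {p : R2} {n : ℕ} (hp : p.IsHomogeneous n) {m : Fin 2 →₀ ℕ}
    (h : MvPolynomial.coeff m p ≠ 0) : m 0 + m 1 = n := by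
  rw [← deg2, Finsupp.degree_eq_weight_one]
  exact hp h

lemma apolar_sum_left {ι : Type*} (s : Finset ι) (f : ι → R2) (P : R2) :
    apolar (∑ i ∈ s, f i) P = ∑ i ∈ s, apolar (f i) P := by
  simp only [apolar, map_sum, LinearMap.sum_apply]

lemma apolar_sum_right {ι : Type*} (Q : R2) (s : Finset ι) (f : ι → R2) :
    apolar Q (∑ i ∈ s, f i) = ∑ i ∈ s, apolar Q (f i) := map_sum (diffOp Q) f s

lemma apolar_expand (Q P : R2) :
    apolar Q P = ∑ a ∈ Q.support, ∑ b ∈ P.support,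
      apolar (MvPolynomial.monomial a (MvPolynomial.coeff a Q))
        (MvPolynomial.monomial b (MvPolynomial.coeff b P)) := by
  conv_lhs => rw [← Q.support_sum_monomial_coeff, ← P.support_sum_monomial_coeff]
  rw [apolar_sum_left]
  exact Finset.sum_congr rfl fun a _ => apolar_sum_right _ _ _

lemma apolar_mem_hs {Q P : R2} {d l : ℕ} (hQ : Q.IsHomogeneous d) (hP : P.IsHomogeneous l) :
    (apolar Q P).IsHomogeneous (l - d) := by
  rw [← MvPolynomial.mem_homogeneousSubmodule, apolar_expand]
  apply Submodule.sum_mem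
  intro a ha
  apply Submodule.sum_mem
  intro b hb
  rw [apolar_monomial]
  by_cases hab : a 0 ≤ b 0 ∧ a 1 ≤ b 1
  · rw [MvPolynomial.mem_homogeneousSubmodule]
    apply MvPolynomial.isHomogeneous_monomial
    rw [deg2, Finsupp.tsub_apply, Finsupp.tsub_apply]
    have h1 := homog_coeff_deg hQ (MvPolynomial.mem_support_iff.mp ha)
    have h2 := homog_coeff_deg hP (MvPolynomial.mem_support_iff.mp hb)
    omega
  · have : ((b 1).descFactorial (a 1) : ℂ) * ((b 0).descFactorial (a 0) : ℂ) = 0 := by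
      rcases not_and_or.mp hab with h | h
      · have : (b 0).descFactorial (a 0) = 0 := Nat.descFactorial_eq_zero_iff_lt.mpr (by omega)
        simp [this]
      · have : (b 1).descFactorial (a 1) = 0 := Nat.descFactorial_eq_zero_iff_lt.mpr (by omega)
        simp [this]
    rw [this]
    simp

lemma apolar_C (c : ℂ) (P : R2) : apolar (MvPolynomial.C c) P = c • P := by
  unfold apolar
  rw [MvPolynomial.C_apply, diffOp_monomial]
  simp

lemma apolar_mul (Q Q' P : R2) : apolar (Q * Q') P = apolar Q (apolar Q' P) := by
  unfold apolar
  rw [map_mul]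
  rfl

end
noncomputable section
open Finsupp MvPolynomial

lemma fin2_ne_cases {a b : Fin 2 →₀ ℕ} (hab : a ≠ b) : a 0 ≠ b 0 ∨ a 1 ≠ b 1 := by
  by_contra hc
  push_neg at hc
  exact hab (by ext i; fin_cases i <;> simp [hc.1, hc.2])

lemma fin2_lt_cases {a b : Fin 2 →₀ ℕ} (hab : a ≠ b) (h : a 0 + a 1 = b 0 + b 1) :
    a 0 < b 0 ∨ a 1 < b 1 := by
  rcases fin2_ne_cases hab with hne | hne <;> omega

lemma desc_self_prod_ne (a : Fin 2 →₀ ℕ) :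
    (((a 1).descFactorial (a 1) : ℂ) * ((a 0).descFactorial (a 0) : ℂ)) ≠ 0 := by
  simp [Nat.descFactorial_self, Nat.factorial_ne_zero]

lemma exists_left_pair {n : ℕ} {S : R2} (hS : S.IsHomogeneous n) (h0 : S ≠ 0) :
    ∃ a : Fin 2 →₀ ℕ, a 0 + a 1 = n ∧ apolar (monomial a 1) S ≠ 0 := by
  obtain ⟨a, ha⟩ := (MvPolynomial.support_nonempty (p := S)).mpr h0
  have hca : coeff a S ≠ 0 := MvPolynomial.mem_support_iff.mp ha
  refine ⟨a, homog_coeff_deg hS hca, ?_⟩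
  conv_lhs => rw [← S.support_sum_monomial_coeff, apolar_sum_right]
  have hsum : ∑ b ∈ S.support, apolar (monomial a 1) (monomial b (coeff b S)) =
      apolar (monomial a 1) (monomial a (coeff a S)) := by
    apply Finset.sum_eq_single_of_mem a ha
    intro b hb hba
    rw [apolar_monomial]
    have hd : b 0 + b 1 = n := homog_coeff_deg hS (MvPolynomial.mem_support_iff.mp hb)
    have had : a 0 + a 1 = n := homog_coeff_deg hS hca
    rcases fin2_lt_cases hba (by omega) with h | h
    · have : (b 0).descFactorial (a 0) = 0 := Nat.descFactorial_eq_zero_iff_lt.mpr h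
      simp [this]
    · have : (b 1).descFactorial (a 1) = 0 := Nat.descFactorial_eq_zero_iff_lt.mpr h
      simp [this]
  rw [hsum, apolar_monomial]
  simp only [tsub_self, one_mul, mul_one, Ne, MvPolynomial.monomial_eq_zero]
  exact mul_ne_zero hca (desc_self_prod_ne a)

lemma exists_right_pair {n : ℕ} {S : R2} (hS : S.IsHomogeneous n) (h0 : S ≠ 0) :
    ∃ a : Fin 2 →₀ ℕ, a 0 + a 1 = n ∧ apolar S (monomial a 1) ≠ 0 := by
  obtain ⟨a, ha⟩ := (MvPolynomial.support_nonempty (p := S)).mpr h0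
  have hca : coeff a S ≠ 0 := MvPolynomial.mem_support_iff.mp ha
  refine ⟨a, homog_coeff_deg hS hca, ?_⟩
  conv_lhs => rw [← S.support_sum_monomial_coeff, apolar_sum_left]
  have hsum : ∑ b ∈ S.support, apolar (monomial b (coeff b S)) (monomial a 1) =
      apolar (monomial a (coeff a S)) (monomial a 1) := by
    apply Finset.sum_eq_single_of_mem a ha
    intro b hb hba
    rw [apolar_monomial]
    have hd : b 0 + b 1 = n := homog_coeff_deg hS (MvPolynomial.mem_support_iff.mp hb)
    have had : a 0 + a 1 = n := homog_coeff_deg hS hca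
    rcases fin2_lt_cases (fun he => hba he.symm) (by omega) with h | h
    · have : (a 0).descFactorial (b 0) = 0 := Nat.descFactorial_eq_zero_iff_lt.mpr h
      simp [this]
    · have : (a 1).descFactorial (b 1) = 0 := Nat.descFactorial_eq_zero_iff_lt.mpr h
      simp [this]
  rw [hsum, apolar_monomial]
  simp only [tsub_self, one_mul, mul_one, Ne, MvPolynomial.monomial_eq_zero]
  exact mul_ne_zero hca (desc_self_prod_ne a)

/-- If all homogeneous forms of degree `l` annihilate `P` (homogeneous of degree `l`),
then `P = 0`. -/
lemma eq_zero_of_all_annihilate {l : ℕ} {P : R2} (hP : P.IsHomogeneous l)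
    (h : ∀ Q : R2, Q.IsHomogeneous l → apolar Q P = 0) : P = 0 := by
  by_contra h0
  obtain ⟨a, hd, hne⟩ := exists_left_pair hP h0
  exact hne (h _ (isHomogeneous_monomial _ (by rw [deg2]; exact hd)))

lemma eq_zero_of_annihilates_all {n : ℕ} {Q : R2} (hQ : Q.IsHomogeneous n)
    (h : ∀ T : R2, T.IsHomogeneous n → apolar Q T = 0) : Q = 0 := by
  by_contra h0
  obtain ⟨a, hd, hne⟩ := exists_right_pair hQ h0
  exact hne (h _ (isHomogeneous_monomial _ (by rw [deg2]; exact hd)))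

end
noncomputable section
open Finsupp MvPolynomial Module

abbrev HS (n : ℕ) : Submodule ℂ R2 := homogeneousSubmodule (Fin 2) ℂ n

def degSetEquiv (n : ℕ) : {d : Fin 2 →₀ ℕ // d ∈ {d : Fin 2 →₀ ℕ | d.degree = n}} ≃ Fin (n+1) where
  toFun d := ⟨d.1 0, by
    have h := d.2
    simp only [Set.mem_setOf_eq, deg2] at h
    omega⟩
  invFun j := ⟨Finsupp.single 0 (j : ℕ) + Finsupp.single 1 (n - (j : ℕ)), by
    have hj : (j : ℕ) ≤ n := by omega
    simp only [Set.mem_setOf_eq, deg2]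
    simp [Finsupp.single_apply]
    omega⟩
  left_inv d := by
    have h := d.2
    simp only [Set.mem_setOf_eq, deg2] at h
    ext i
    fin_cases i <;> simp [Finsupp.single_apply] <;> omega
  right_inv j := by
    ext
    simp [Finsupp.single_apply]

lemma hs_eq_restrict (n : ℕ) :
    HS n = MvPolynomial.restrictSupport ℂ {d : Fin 2 →₀ ℕ | d.degree = n} :=
  homogeneousSubmodule_eq_finsupp_supported _ _ n

def hsBasis (n : ℕ) : Basis (Fin (n+1)) ℂ (HS n) :=
  ((MvPolynomial.basisRestrictSupport ℂ _).reindex (degSetEquiv n)).map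
    (LinearEquiv.ofEq _ _ (hs_eq_restrict n)).symm

instance hs_fd (n : ℕ) : FiniteDimensional ℂ (HS n) :=
  Module.Finite.of_basis (hsBasis n)

lemma finrank_hs (n : ℕ) : finrank ℂ (HS n) = n + 1 := by
  rw [finrank_eq_card_basis (hsBasis n), Fintype.card_fin]

lemma fd_of_le_hs {d : ℕ} {V : Submodule ℂ R2} (hV : V ≤ HS d) : FiniteDimensional ℂ V :=
  Module.Finite.equiv (Submodule.comapSubtypeEquivOfLe hV)

end
noncomputable section
open Finsupp MvPolynomial Module

lemma X0_pow_dvd_iff (k : ℕ) (p : R2) :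
    (X (0 : Fin 2) : R2) ^ k ∣ p ↔ ∀ a ∈ p.support, k ≤ a 0 := by
  rw [X_pow_eq_monomial, monomial_one_dvd_iff_modMonomial_eq_zero]
  constructor
  · intro h a ha
    by_contra hk
    have hnle : ¬ Finsupp.single (0 : Fin 2) k ≤ a := by
      rw [Finsupp.single_le_iff]; exact hk
    have := coeff_modMonomial_of_not_le p hnle
    rw [h] at this
    exact (MvPolynomial.mem_support_iff.mp ha) (by simpa using this.symm)
  · intro h
    ext s'
    by_cases hle : Finsupp.single (0 : Fin 2) k ≤ s'
    · rw [coeff_modMonomial_of_le p hle]; simp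
    · rw [coeff_modMonomial_of_not_le p hle, MvPolynomial.coeff_zero]
      by_contra hc
      exact hle (Finsupp.single_le_iff.mpr (h s' (MvPolynomial.mem_support_iff.mpr hc)))

lemma growth {d : ℕ} {V : Submodule ℂ R2} (hV : V ≤ HS d) (hne : V ≠ ⊥) :
    finrank ℂ V + 1 ≤ finrank ℂ
      ↥(Submodule.map (LinearMap.mulLeft ℂ (X 0 : R2)) V ⊔
        Submodule.map (LinearMap.mulLeft ℂ (X 1 : R2)) V) := by
  haveI := fd_of_le_hs hV
  set m0 : R2 →ₗ[ℂ] R2 := LinearMap.mulLeft ℂ (X 0 : R2) with hm0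
  set m1 : R2 →ₗ[ℂ] R2 := LinearMap.mulLeft ℂ (X 1 : R2) with hm1
  set W := Submodule.map m0 V ⊔ Submodule.map m1 V with hW
  have hhom : ∀ (i : Fin 2), ∀ v ∈ V, (X i : R2) * v ∈ HS (d + 1) := by
    intro i v hv
    rw [MvPolynomial.mem_homogeneousSubmodule]
    have := (MvPolynomial.isHomogeneous_X ℂ i).mul
      ((MvPolynomial.mem_homogeneousSubmodule _ _).mp (hV hv))
    simpa [Nat.add_comm] using this
  have hWle : W ≤ HS (d + 1) := by
    rw [hW]
    apply sup_le <;>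
    · rintro x ⟨v, hv, rfl⟩
      exact hhom _ v hv
  haveI := fd_of_le_hs hWle
  by_contra hlt
  push_neg at hlt
  have hinj : Function.Injective m0 := by
    intro a b hab
    simp only [hm0, LinearMap.mulLeft_apply] at hab
    exact mul_left_cancel₀ (MvPolynomial.X_ne_zero 0) hab
  have e0 : finrank ℂ (Submodule.map m0 V) = finrank ℂ V :=
    (Submodule.equivMapOfInjective m0 hinj V).finrank_eq.symm
  have hWeq : Submodule.map m0 V = W :=
    Submodule.eq_of_le_of_finrank_le le_sup_left (le_trans (Nat.lt_succ_iff.mp hlt) e0.ge)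
  have hsub : Submodule.map m1 V ≤ Submodule.map m0 V := hWeq ▸ le_sup_right
  have key : ∀ k, ∀ A ∈ V, ∀ a ∈ A.support, k ≤ a 0 := by
    intro k
    induction k with
    | zero => intro A _ a _; exact Nat.zero_le _
    | succ k ih =>
      intro A hA a ha
      obtain ⟨B, hB, hBA⟩ := hsub ⟨A, hA, rfl⟩
      simp only [hm0, hm1, LinearMap.mulLeft_apply] at hBA
      have hdvd : (X (0 : Fin 2) : R2) ^ (k + 1) ∣ X 0 * B := by
        rw [pow_succ']
        exact mul_dvd_mul_left _ ((X0_pow_dvd_iff k B).mpr (ih B hB))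
      have ha' : (Finsupp.single (1 : Fin 2) 1 + a) ∈ (X (0:Fin 2) * B).support := by
        rw [hBA, MvPolynomial.mem_support_iff, MvPolynomial.coeff_X_mul]
        exact MvPolynomial.mem_support_iff.mp ha
      have := (X0_pow_dvd_iff (k + 1) _).mp hdvd _ ha'
      simpa [Finsupp.single_apply] using this
  obtain ⟨A, hA, hA0⟩ := Submodule.ne_bot_iff V |>.mp hne
  obtain ⟨a, ha⟩ := (MvPolynomial.support_nonempty (p := A)).mpr hA0
  have h1 := key (d + 1) A hA a ha
  have h2 : a 0 + a 1 = d :=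
    homog_coeff_deg ((MvPolynomial.mem_homogeneousSubmodule _ _).mp (hV hA))
      (MvPolynomial.mem_support_iff.mp ha)
  omega

end
noncomputable section
open Finsupp MvPolynomial Module

lemma apolar_add_left (Q Q' P : R2) : apolar (Q + Q') P = apolar Q P + apolar Q' P := by
  simp [apolar, map_add]

lemma apolar_smul_left (c : ℂ) (Q P : R2) : apolar (c • Q) P = c • apolar Q P := by
  simp [apolar, map_smul]

lemma apolar_add_right (Q P P' : R2) : apolar Q (P + P') = apolar Q P + apolar Q P' :=
  map_add (diffOp Q) P P'

lemma apolar_smul_right (c : ℂ) (Q P : R2) : apolar Q (c • P) = c • apolar Q P :=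
  map_smul (diffOp Q) c P

lemma homog0_eq_zero {p : R2} (hp : p.IsHomogeneous 0) (h0 : MvPolynomial.coeff 0 p = 0) :
    p = 0 := by
  ext m
  rw [MvPolynomial.coeff_zero]
  by_cases hm : m = (0 : Fin 2 →₀ ℕ)
  · rw [hm]; exact h0
  · by_contra hc
    have hdeg := homog_coeff_deg hp hc
    exact hm (by ext i; fin_cases i <;> simp <;> omega)

/-- The apolarity pairing on `ℂ[X₀,X₁]_n`. -/
def pairB (n : ℕ) : HS n →ₗ[ℂ] Module.Dual ℂ (HS n) :=
  LinearMap.mk₂ ℂ (fun Q T => MvPolynomial.coeff 0 (apolar (Q : R2) (T : R2)))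
    (fun Q Q' T => by
      simp only [Submodule.coe_add, apolar_add_left, MvPolynomial.coeff_add])
    (fun c Q T => by
      simp only [Submodule.coe_smul, apolar_smul_left, MvPolynomial.coeff_smul, smul_eq_mul])
    (fun Q T T' => by
      simp only [Submodule.coe_add, apolar_add_right, MvPolynomial.coeff_add])
    (fun c Q T => by
      simp only [Submodule.coe_smul, apolar_smul_right, MvPolynomial.coeff_smul, smul_eq_mul])

lemma apolar_hs_zero {n : ℕ} (Q T : HS n) (h : MvPolynomial.coeff 0 (apolar (Q:R2) (T:R2)) = 0) :
    apolar (Q : R2) (T : R2) = 0 := by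
  apply homog0_eq_zero _ h
  have := apolar_mem_hs ((MvPolynomial.mem_homogeneousSubmodule _ _).mp Q.2)
    ((MvPolynomial.mem_homogeneousSubmodule _ _).mp T.2)
  rwa [Nat.sub_self] at this

lemma pairB_injective (n : ℕ) : Function.Injective (pairB n) := by
  rw [← LinearMap.ker_eq_bot]
  rw [LinearMap.ker_eq_bot']
  intro Q hQ
  have : (Q : R2) = 0 := by
    apply eq_zero_of_annihilates_all ((MvPolynomial.mem_homogeneousSubmodule _ _).mp Q.2)
    intro T hT
    have h0 : pairB n Q ⟨T, hT⟩ = 0 := by rw [hQ]; rfl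
    exact apolar_hs_zero Q ⟨T, hT⟩ h0
  exact Subtype.ext this

lemma flipB_injective (n : ℕ) : Function.Injective (pairB n).flip := by
  rw [← LinearMap.ker_eq_bot, LinearMap.ker_eq_bot']
  intro T hT
  have : (T : R2) = 0 := by
    apply eq_zero_of_all_annihilate ((MvPolynomial.mem_homogeneousSubmodule _ _).mp T.2)
    intro Q hQ
    have h0 : (pairB n).flip T ⟨Q, hQ⟩ = 0 := by rw [hT]; rfl
    exact apolar_hs_zero ⟨Q, hQ⟩ T h0
  exact Subtype.ext this

lemma pairB_surjective (n : ℕ) : Function.Surjective (pairB n) :=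
  (LinearMap.injective_iff_surjective_of_finrank_eq_finrank
    (Subspace.dual_finrank_eq).symm).mp (pairB_injective n)

/-- The restricted apolarity map `ℂ[X]_a → ℂ[X]_b`, `Q ↦ Q • P`. -/
def fm {P : R2} {l : ℕ} (hP : P.IsHomogeneous l) (a b : ℕ) (hab : l - a = b) :
    HS a →ₗ[ℂ] HS b :=
  ((apolarLM P).comp (HS a).subtype).codRestrict (HS b) (fun Q => by
    subst hab
    rw [MvPolynomial.mem_homogeneousSubmodule]
    exact apolar_mem_hs ((MvPolynomial.mem_homogeneousSubmodule _ _).mp Q.2) hP)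

lemma fm_coe {P : R2} {l : ℕ} (hP : P.IsHomogeneous l) {a b : ℕ} (hab : l - a = b) (Q : HS a) :
    (fm hP a b hab Q : R2) = apolar (Q : R2) P := rfl

lemma rank_symm {P : R2} {l : ℕ} (hP : P.IsHomogeneous l) {a b : ℕ}
    (ha : l - a = b) (hb : l - b = a) :
    finrank ℂ (LinearMap.range (fm hP a b ha)) = finrank ℂ (LinearMap.range (fm hP b a hb)) := by
  have key : (fm hP a b ha).dualMap ∘ₗ (pairB b) = (pairB a).flip ∘ₗ (fm hP b a hb) := by
    apply LinearMap.ext; intro T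
    apply LinearMap.ext; intro Q
    show MvPolynomial.coeff 0 (apolar (T : R2) ((fm hP a b ha Q : R2)))
      = MvPolynomial.coeff 0 (apolar (Q : R2) ((fm hP b a hb T : R2)))
    rw [fm_coe, fm_coe, ← apolar_mul, ← apolar_mul, mul_comm]
  have h1 : finrank ℂ (LinearMap.range ((fm hP a b ha).dualMap ∘ₗ (pairB b)))
      = finrank ℂ (LinearMap.range (fm hP a b ha)) := by
    rw [LinearMap.range_comp, LinearMap.range_eq_top.mpr (pairB_surjective b),
      Submodule.map_top]
    exact LinearMap.finrank_range_dualMap_eq_finrank_range _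
  have h2 : finrank ℂ (LinearMap.range ((pairB a).flip ∘ₗ (fm hP b a hb)))
      = finrank ℂ (LinearMap.range (fm hP b a hb)) := by
    rw [LinearMap.range_comp]
    exact (Submodule.equivMapOfInjective _ (flipB_injective a) _).finrank_eq.symm
  rw [← h1, key, h2]

end
set_option maxHeartbeats 1000000
set_option synthInstance.maxHeartbeats 400000

noncomputable section
open Finsupp MvPolynomial Module LinearMap

lemma finrank_le_of_le {p q : Submodule ℂ R2} (h : p ≤ q) [FiniteDimensional ℂ q] :
    finrank ℂ p ≤ finrank ℂ q := by
  have e : finrank ℂ ↥(Submodule.comap q.subtype p) = finrank ℂ ↥p :=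
    (Submodule.comapSubtypeEquivOfLe h).finrank_eq
  exact le_of_eq_of_le e.symm (Submodule.finrank_le _)

lemma ann_le_hs (P : R2) (d : ℕ) : annComp P d ≤ HS d := inf_le_left

lemma ker_fm {P : R2} {l : ℕ} (hP : P.IsHomogeneous l) (a b : ℕ) (hab : l - a = b) :
    LinearMap.ker (fm hP a b hab) = Submodule.comap (HS a).subtype (annComp P a) := by
  ext Q
  simp only [LinearMap.mem_ker, Submodule.mem_comap, annComp, Submodule.mem_inf]
  constructor
  · intro h
    refine ⟨Q.2, ?_⟩
    have h2 : (fm hP a b hab Q : R2) = 0 := by rw [h]; rfl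
    rw [fm_coe] at h2
    exact h2
  · rintro ⟨-, h⟩
    apply Subtype.ext
    rw [fm_coe]
    exact h
  
lemma fm_ker_finrank {P : R2} {l : ℕ} (hP : P.IsHomogeneous l) (a b : ℕ) (hab : l - a = b) :
    finrank ℂ (LinearMap.ker (fm hP a b hab)) = finrank ℂ (annComp P a) := by
  rw [ker_fm]
  exact (Submodule.comapSubtypeEquivOfLe (ann_le_hs P a)).finrank_eq

lemma rn {P : R2} {l : ℕ} (hP : P.IsHomogeneous l) (e : ℕ) :
    finrank ℂ (LinearMap.range (fm hP e (l-e) rfl)) + finrank ℂ (annComp P e) = e + 1 := by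
  have h := LinearMap.finrank_range_add_finrank_ker (fm hP e (l-e) rfl)
  rw [fm_ker_finrank, finrank_hs] at h
  exact h

lemma fm_indep {P : R2} {l : ℕ} (hP : P.IsHomogeneous l) (a b : ℕ) (hab : l - a = b) :
    finrank ℂ (LinearMap.range (fm hP a b hab))
      = finrank ℂ (LinearMap.range (fm hP a (l-a) rfl)) := by
  subst hab; rfl

lemma H_symm {P : R2} {l : ℕ} (hP : P.IsHomogeneous l) {e : ℕ} (he : e ≤ l) :
    finrank ℂ (LinearMap.range (fm hP e (l-e) rfl))
      = finrank ℂ (LinearMap.range (fm hP (l-e) (l-(l-e)) rfl)) := by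
  have hb : l - (l - e) = e := by omega
  rw [rank_symm hP rfl hb]
  exact fm_indep hP (l-e) e hb

lemma ann_bot_of_lt_d1 {P : R2} {e : ℕ} (he : e < d1 P) : annComp P e = ⊥ := by
  by_contra h
  obtain ⟨Q, hQ, hQ0⟩ := (Submodule.ne_bot_iff _).mp h
  rw [annComp, Submodule.mem_inf] at hQ
  have hmem : e ∈ {d | ∃ Q : R2, Q ≠ 0 ∧ Q.IsHomogeneous d ∧ apolar Q P = 0} :=
    ⟨Q, hQ0, (MvPolynomial.mem_homogeneousSubmodule _ _).mp hQ.1, by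
      have := LinearMap.mem_ker.mp hQ.2; rwa [apolarLM_apply] at this⟩
  exact absurd (Nat.sInf_le hmem) (Nat.not_le.mpr he)

lemma exists_ann_at_half {P : R2} {l : ℕ} (hP : P.IsHomogeneous l) :
    ∃ Q : R2, Q ≠ 0 ∧ Q.IsHomogeneous (l/2 + 1) ∧ apolar Q P = 0 := by
  set e := l / 2 + 1 with hedef
  have hrange : finrank ℂ (LinearMap.range (fm hP e (l-e) rfl)) ≤ l - e + 1 := by
    have h := Submodule.finrank_le (LinearMap.range (fm hP e (l-e) rfl))
    rwa [finrank_hs] at h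
  have hk := rn hP e
  have hkpos : 1 ≤ finrank ℂ (annComp P e) := by omega
  have hbot : annComp P e ≠ ⊥ := by
    intro h
    rw [h, finrank_bot] at hkpos
    omega
  obtain ⟨Q, hQ, hQ0⟩ := (Submodule.ne_bot_iff _).mp hbot
  rw [annComp, Submodule.mem_inf] at hQ
  exact ⟨Q, hQ0, (MvPolynomial.mem_homogeneousSubmodule _ _).mp hQ.1, by
    have := LinearMap.mem_ker.mp hQ.2; rwa [apolarLM_apply] at this⟩

lemma d1_le_half {P : R2} {l : ℕ} (hP : P.IsHomogeneous l) :
    d1 P ≤ l / 2 + 1 :=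
  Nat.sInf_le (exists_ann_at_half hP)

lemma d1_mem {P : R2} {l : ℕ} (hP : P.IsHomogeneous l) :
    ∃ Q : R2, Q ≠ 0 ∧ Q.IsHomogeneous (d1 P) ∧ apolar Q P = 0 :=
  Nat.sInf_mem (⟨l/2 + 1, exists_ann_at_half hP⟩ :
    Set.Nonempty {d | ∃ Q : R2, Q ≠ 0 ∧ Q.IsHomogeneous d ∧ apolar Q P = 0})

lemma d1_pos {P : R2} {l : ℕ} (hP : P.IsHomogeneous l) (hne : P ≠ 0) : 1 ≤ d1 P := by
  rcases Nat.eq_zero_or_pos (d1 P) with h | h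
  · obtain ⟨Q, hQ0, hQh, hQa⟩ := d1_mem hP
    rw [h] at hQh
    exfalso
    have hc : Q = MvPolynomial.C (MvPolynomial.coeff 0 Q) := by
      ext m
      by_cases hm : m = (0 : Fin 2 →₀ ℕ)
      · rw [hm]; simp
      · rw [MvPolynomial.coeff_C, if_neg (fun hh => hm hh.symm)]
        by_contra hcc
        have := homog_coeff_deg hQh hcc
        exact hm (by ext i; fin_cases i <;> simp <;> omega)
    rw [hc, apolar_C, smul_eq_zero] at hQa
    rcases hQa with h1 | h2
    · exact hQ0 (by rw [hc, h1, map_zero])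
    · exact hne h2
  · exact h

end
noncomputable section
open Finsupp MvPolynomial Module LinearMap

def Hd {P : R2} {l : ℕ} (hP : P.IsHomogeneous l) (e : ℕ) : ℕ :=
  finrank ℂ (LinearMap.range (fm hP e (l-e) rfl))

lemma Hd_rn {P : R2} {l : ℕ} (hP : P.IsHomogeneous l) (e : ℕ) :
    Hd hP e + finrank ℂ (annComp P e) = e + 1 := rn hP e

lemma Hd_symm' {P : R2} {l : ℕ} (hP : P.IsHomogeneous l) {e : ℕ} (he : e ≤ l) :
    Hd hP e = Hd hP (l - e) := H_symm hP he

lemma ann_lower {P : R2} {l : ℕ} (hP : P.IsHomogeneous l) {d : ℕ}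
    (hrd : d1 P ≤ d) : d - d1 P + 1 ≤ finrank ℂ (annComp P d) := by
  obtain ⟨Q0, hQ0, hQh, hQa⟩ := d1_mem hP
  set r := d1 P with hr
  have hsub : Submodule.map (LinearMap.mulRight ℂ Q0) (HS (d - r)) ≤ annComp P d := by
    rintro x ⟨Cp, hC, rfl⟩
    simp only [LinearMap.mulRight_apply]
    rw [annComp, Submodule.mem_inf]
    constructor
    · rw [MvPolynomial.mem_homogeneousSubmodule]
      have h2 := ((MvPolynomial.mem_homogeneousSubmodule _ _).mp hC).mul hQh
      have he : d - r + r = d := by omega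
      rwa [he] at h2
    · rw [LinearMap.mem_ker, apolarLM_apply, apolar_mul, hQa]
      exact map_zero (diffOp Cp)
  haveI := fd_of_le_hs (ann_le_hs P d)
  have hinj : Function.Injective (LinearMap.mulRight ℂ Q0) := fun a b hab => by
    simp only [LinearMap.mulRight_apply] at hab
    exact mul_right_cancel₀ hQ0 hab
  have e1 : finrank ℂ (Submodule.map (LinearMap.mulRight ℂ Q0) (HS (d - r))) = d - r + 1 := by
    rw [← finrank_hs (d - r)]
    exact ((Submodule.equivMapOfInjective _ hinj _).finrank_eq).symm
  rw [← e1]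
  exact finrank_le_of_le hsub

lemma ann_step {P : R2} {l : ℕ} (hP : P.IsHomogeneous l) {e : ℕ}
    (hbot : annComp P e ≠ ⊥) :
    finrank ℂ (annComp P e) + 1 ≤ finrank ℂ (annComp P (e + 1)) := by
  have hgrow := growth (ann_le_hs P e) hbot
  have hone : ∀ i : Fin 2, ∀ v ∈ annComp P e, (X i : R2) * v ∈ annComp P (e + 1) := by
    intro i v hv
    rw [annComp, Submodule.mem_inf] at hv ⊢
    constructor
    · rw [MvPolynomial.mem_homogeneousSubmodule]
      have h2 := (MvPolynomial.isHomogeneous_X ℂ i).mul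
        ((MvPolynomial.mem_homogeneousSubmodule _ _).mp hv.1)
      simpa [Nat.add_comm] using h2
    · rw [LinearMap.mem_ker, apolarLM_apply, apolar_mul]
      have h3 : apolar v P = 0 := by
        have := LinearMap.mem_ker.mp hv.2
        rwa [apolarLM_apply] at this
      rw [h3]
      exact map_zero (diffOp (X i))
  have hle : Submodule.map (LinearMap.mulLeft ℂ (X 0 : R2)) (annComp P e) ⊔
      Submodule.map (LinearMap.mulLeft ℂ (X 1 : R2)) (annComp P e) ≤ annComp P (e + 1) := by
    apply sup_le <;>
    · rintro x ⟨v, hv, rfl⟩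
      exact hone _ v hv
  haveI := fd_of_le_hs (ann_le_hs P (e + 1))
  exact le_trans hgrow (finrank_le_of_le hle)

lemma H_mono {P : R2} {l : ℕ} (hP : P.IsHomogeneous l) (m n : ℕ)
    (hm : d1 P ≤ m) (hmn : m ≤ n) : Hd hP n ≤ Hd hP m := by
  induction n, hmn using Nat.le_induction with
  | base => exact le_refl _
  | succ n hmn ih =>
    have hlow := ann_lower hP (le_trans hm hmn)
    have hbot : annComp P n ≠ ⊥ := by
      intro h
      rw [h, finrank_bot] at hlow
      omega
    have hstep := ann_step hP hbot
    have h1 := Hd_rn hP n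
    have h2 := Hd_rn hP (n + 1)
    omega

lemma range_fm {P : R2} {l : ℕ} (hP : P.IsHomogeneous l) (d : ℕ) :
    LinearMap.range (fm hP d (l-d) rfl) = apolarImage P l d := by
  ext x
  simp only [LinearMap.mem_range, apolarImage, Submodule.mem_comap, Submodule.mem_map]
  constructor
  · rintro ⟨Q, rfl⟩
    exact ⟨↑Q, Q.2, by rw [apolarLM_apply, ← fm_coe hP rfl Q]; rfl⟩
  · rintro ⟨q, hq, hqe⟩
    refine ⟨⟨q, hq⟩, ?_⟩
    apply Subtype.ext
    rw [fm_coe, ← apolarLM_apply]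
    exact hqe

lemma H_eq_min {P : R2} {l : ℕ} (hP : P.IsHomogeneous l) (hne : P ≠ 0) {d : ℕ}
    (hd : d ≤ l / 2) : Hd hP d = min (d + 1) (d1 P) := by
  set r := d1 P with hr
  have hr1 : 1 ≤ r := d1_pos hP hne
  have hrhalf : r ≤ l / 2 + 1 := d1_le_half hP
  by_cases hcase : d < r
  · have hbot : annComp P d = ⊥ := ann_bot_of_lt_d1 (by omega)
    have ha : finrank ℂ (annComp P d) = 0 := by rw [hbot]; exact finrank_bot ℂ _
    have h1 := Hd_rn hP d
    rw [ha] at h1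
    rw [min_eq_left (by omega)]
    omega
  · push_neg at hcase
    rw [min_eq_right (by omega)]
    have hup : Hd hP d ≤ r := by
      have hlow := ann_lower hP hcase
      have h1 := Hd_rn hP d
      omega
    have hAr1 : annComp P (r - 1) = ⊥ := ann_bot_of_lt_d1 (by omega)
    have hHr1 : Hd hP (r - 1) = r := by
      have h1 := Hd_rn hP (r - 1)
      rw [hAr1, finrank_bot] at h1
      omega
    have hsym := Hd_symm' hP (e := r - 1) (by omega)
    have hmono := H_mono hP d (l - (r - 1)) hcase (by omega)
    omega

lemma coker_formula {P : R2} {l : ℕ} (hP : P.IsHomogeneous l) (hne : P ≠ 0) {d : ℕ}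
    (hd : d ≤ l / 2) :
    finrank ℂ (ApolarCoker P l d) = l - 2 * d + (d + 1 - d1 P) := by
  have hq : finrank ℂ (ApolarCoker P l d) + finrank ℂ (apolarImage P l d)
      = finrank ℂ (HS (l - d)) :=
    Submodule.finrank_quotient_add_finrank (apolarImage P l d)
  have hH : Hd hP d = min (d + 1) (d1 P) := H_eq_min hP hne hd
  have hAI : finrank ℂ (apolarImage P l d) = Hd hP d := by
    rw [Hd, range_fm hP d]
  have hfr := finrank_hs (l - d)
  have hr1 : 1 ≤ d1 P := d1_pos hP hne
  rcases le_or_gt (d + 1) (d1 P) with hmin | hmin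
  · rw [min_eq_left hmin] at hH
    omega
  · rw [min_eq_right (by omega)] at hH
    omega

end
/-- Comparison of the level sets `P^l_{d,s}` of `P ↦ dim C_P^d` with the strata `P^l_r` of
the `d₁`-stratification (case `0 ≤ d ≤ ⌊l/2⌋`). -/
theorem level_sets_small_d (l d s : ℕ) (hd : d ≤ l / 2) :
    (l - 2 * d < s → s ≤ l - d →
      {P : MvPolynomial (Fin 2) ℂ | P.IsHomogeneous l ∧ P ≠ 0 ∧
          Module.finrank ℂ (ApolarCoker P l d) = s}
        = {P : MvPolynomial (Fin 2) ℂ | P.IsHomogeneous l ∧ P ≠ 0 ∧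
            d1 P = l - d + 1 - s}) ∧
    (s = l - 2 * d →
      {P : MvPolynomial (Fin 2) ℂ | P.IsHomogeneous l ∧ P ≠ 0 ∧
          Module.finrank ℂ (ApolarCoker P l d) = s}
        = ⋃ r ∈ Set.Icc (d + 1) (l / 2 + 1),
            {P : MvPolynomial (Fin 2) ℂ | P.IsHomogeneous l ∧ P ≠ 0 ∧ d1 P = r}) ∧
    (s < l - 2 * d ∨ l - d < s →
      {P : MvPolynomial (Fin 2) ℂ | P.IsHomogeneous l ∧ P ≠ 0 ∧
          Module.finrank ℂ (ApolarCoker P l d) = s} = ∅) := by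
  refine ⟨?_, ?_, ?_⟩
  · intro h1 h2
    ext P
    simp only [Set.mem_setOf_eq]
    constructor
    · rintro ⟨hP, hne, hs⟩
      refine ⟨hP, hne, ?_⟩
      have hf := coker_formula hP hne hd
      have hr1 := d1_pos hP hne
      omega
    · rintro ⟨hP, hne, hr⟩
      refine ⟨hP, hne, ?_⟩
      have hf := coker_formula hP hne hd
      have hr1 := d1_pos hP hne
      omega
  · intro hs
    ext P
    simp only [Set.mem_setOf_eq, Set.mem_iUnion, Set.mem_Icc, exists_prop]
    constructor
    · rintro ⟨hP, hne, hfin⟩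
      have hf := coker_formula hP hne hd
      have hrhalf := d1_le_half hP
      have hr1 := d1_pos hP hne
      exact ⟨d1 P, ⟨by omega, hrhalf⟩, hP, hne, rfl⟩
    · rintro ⟨r, ⟨hra, hrb⟩, hP, hne, hr⟩
      have hf := coker_formula hP hne hd
      exact ⟨hP, hne, by omega⟩
  · intro hcase
    ext P
    simp only [Set.mem_setOf_eq, Set.mem_empty_iff_false, iff_false, not_and]
    intro hP hne hfin
    have hf := coker_formula hP hne hd
    have hr1 := d1_pos hP hne
    omega
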